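/- (Armijo backtracking terminates.) Let x ∈ relint(X) with v(x) ≠ 0, let ᾱ(x) = min{α₀(x), 2β/L}, and fix μ ∈ (0,1), δ ∈ (0,1). Then there exists a nonnegative integer ℓ such that f(x + δ^ℓ ᾱ(x) v(x)) − f(x) ≤ −μ δ^ℓ ᾱ(x) ‖v(x)‖ₓ²; that is, the Armijo backtracking procedure at x terminates after finitely many shrinkage steps. -/

import Mathlib

open Matrix Filter Set

namespace HBA

noncomputable section

variable {n m : ℕ}

/-- Feasible set `X = {x | Ax = b, x ≥ 0}`. -/
def Feas (A : Matrix (Fin m) (Fin n) ℝ) (b : Fin m → ℝ) : Set (Fin n → ℝ) :=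
  {x | A *ᵥ x = b ∧ ∀ i, 0 ≤ x i}

/-- Relative interior of the feasible set: `{x | Ax = b, x > 0}`. -/
def RelInt (A : Matrix (Fin m) (Fin n) ℝ) (b : Fin m → ℝ) : Set (Fin n → ℝ) :=
  {x | A *ᵥ x = b ∧ ∀ i, 0 < x i}

/-- Euclidean norm on `Fin n → ℝ`. -/
def euclNorm (x : Fin n → ℝ) : ℝ := Real.sqrt (∑ i, (x i) ^ 2)

/-- The linear functional `h ↦ ∑ i, v i * h i`, as a continuous linear map. -/
def toDualCLM (v : Fin n → ℝ) : (Fin n → ℝ) →L[ℝ] ℝ :=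
  ∑ i, v i • (ContinuousLinearMap.proj i : (Fin n → ℝ) →L[ℝ] ℝ)

/-- Hessian metric `H(x) = diag(θ₁''(x₁),…,θₙ''(xₙ))`, where `D i = θᵢ''`. -/
def Hmat (D : Fin n → ℝ → ℝ) (x : Fin n → ℝ) : Matrix (Fin n) (Fin n) ℝ :=
  Matrix.diagonal fun i => D i (x i)

/-- Inverse Hessian metric `H(x)⁻¹ = diag(1/θᵢ''(xᵢ))`. -/
def Hinv (D : Fin n → ℝ → ℝ) (x : Fin n → ℝ) : Matrix (Fin n) (Fin n) ℝ :=
  Matrix.diagonal fun i => (D i (x i))⁻¹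

/-- Continuous extension of `H(x)⁻¹` to the boundary, setting `1/θᵢ''(xᵢ) := 0` if `xᵢ = 0`. -/
def HinvC (D : Fin n → ℝ → ℝ) (x : Fin n → ℝ) : Matrix (Fin n) (Fin n) ℝ :=
  Matrix.diagonal fun i => if x i = 0 then 0 else (D i (x i))⁻¹

/-- Dual variable `y(x) = (A H(x)⁻¹ Aᵀ)⁻¹ A H(x)⁻¹ ∇f(x)`. -/
def dualY (A : Matrix (Fin m) (Fin n) ℝ) (D : Fin n → ℝ → ℝ)
    (g : (Fin n → ℝ) → Fin n → ℝ) (x : Fin n → ℝ) : Fin m → ℝ :=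
  (A * Hinv D x * Aᵀ)⁻¹ *ᵥ (A *ᵥ (Hinv D x *ᵥ g x))

/-- Continuous boundary extension of the dual variable. -/
def dualYC (A : Matrix (Fin m) (Fin n) ℝ) (D : Fin n → ℝ → ℝ)
    (g : (Fin n → ℝ) → Fin n → ℝ) (x : Fin n → ℝ) : Fin m → ℝ :=
  (A * HinvC D x * Aᵀ)⁻¹ *ᵥ (A *ᵥ (HinvC D x *ᵥ g x))

/-- Reduced cost `r(x) = ∇f(x) − Aᵀ y(x)`. -/
def redCost (A : Matrix (Fin m) (Fin n) ℝ) (D : Fin n → ℝ → ℝ)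
    (g : (Fin n → ℝ) → Fin n → ℝ) (x : Fin n → ℝ) : Fin n → ℝ :=
  g x - Aᵀ *ᵥ dualY A D g x

/-- Continuous boundary extension of the reduced cost. -/
def redCostC (A : Matrix (Fin m) (Fin n) ℝ) (D : Fin n → ℝ → ℝ)
    (g : (Fin n → ℝ) → Fin n → ℝ) (x : Fin n → ℝ) : Fin n → ℝ :=
  g x - Aᵀ *ᵥ dualYC A D g x

/-- Search direction `v(x) = −H(x)⁻¹ r(x)`. -/
def searchDir (A : Matrix (Fin m) (Fin n) ℝ) (D : Fin n → ℝ → ℝ)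
    (g : (Fin n → ℝ) → Fin n → ℝ) (x : Fin n → ℝ) : Fin n → ℝ :=
  -(Hinv D x *ᵥ redCost A D g x)

/-- The squared local norm `‖z‖ₓ² = zᵀ H(x) z`. -/
def xnorm2 (D : Fin n → ℝ → ℝ) (x z : Fin n → ℝ) : ℝ := z ⬝ᵥ (Hmat D x *ᵥ z)

/-- Bootstrap step-size `ᾱ(x) = min{α₀(x), 2β/L}`, where
`α₀(x) = min{xᵢθᵢ''(xᵢ)/rᵢ(x) : rᵢ(x) > 0}` and `min ∅ = +∞`. -/
def alphaBar (A : Matrix (Fin m) (Fin n) ℝ) (D : Fin n → ℝ → ℝ)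
    (g : (Fin n → ℝ) → Fin n → ℝ) (β Lf : ℝ) (x : Fin n → ℝ) : ℝ :=
  sInf (insert (2 * β / Lf)
    {a : ℝ | ∃ i, 0 < redCost A D g x i ∧ a = x i * D i (x i) / redCost A D g x i})

/-- The Armijo sufficient-decrease condition at backtracking exponent `l`:
`f(x + δ^l ᾱ(x) v(x)) − f(x) ≤ −μ δ^l ᾱ(x) ‖v(x)‖ₓ²`. -/
def armijoCond (A : Matrix (Fin m) (Fin n) ℝ) (D : Fin n → ℝ → ℝ)
    (g : (Fin n → ℝ) → Fin n → ℝ) (f : (Fin n → ℝ) → ℝ) (β Lf μ δ : ℝ)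
    (x : Fin n → ℝ) (l : ℕ) : Prop :=
  f (x + (δ ^ l * alphaBar A D g β Lf x) • searchDir A D g x) - f x ≤
    -(μ * (δ ^ l * alphaBar A D g β Lf x) * xnorm2 D x (searchDir A D g x))

/-- The Armijo step-size `α(x) = δ^ℓ ᾱ(x)`, `ℓ` the smallest exponent giving sufficient decrease. -/
def stepSize (A : Matrix (Fin m) (Fin n) ℝ) (D : Fin n → ℝ → ℝ)
    (g : (Fin n → ℝ) → Fin n → ℝ) (f : (Fin n → ℝ) → ℝ) (β Lf μ δ : ℝ)
    (x : Fin n → ℝ) : ℝ :=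
  δ ^ sInf {l : ℕ | armijoCond A D g f β Lf μ δ x l} * alphaBar A D g β Lf x

/-- The iterates of the Hessian barrier algorithm: `x⁰ = x0`, `x^{k+1} = x^k + α(x^k) v(x^k)`. -/
def hba (A : Matrix (Fin m) (Fin n) ℝ) (D : Fin n → ℝ → ℝ)
    (g : (Fin n → ℝ) → Fin n → ℝ) (f : (Fin n → ℝ) → ℝ) (β Lf μ δ : ℝ)
    (x0 : Fin n → ℝ) : ℕ → Fin n → ℝ
  | 0 => x0
  | k + 1 =>
      hba A D g f β Lf μ δ x0 k
        + stepSize A D g f β Lf μ δ (hba A D g f β Lf μ δ x0 k)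
            • searchDir A D g (hba A D g f β Lf μ δ x0 k)

end

end HBA

section Aux

lemma hba_aux_inj {n m : ℕ} (A : Matrix (Fin m) (Fin n) ℝ) (hrank : A.rank = m) :
    Function.Injective A.vecMul := by
  rw [Matrix.vecMul_injective_iff, linearIndependent_iff_card_eq_finrank_span]
  have := Matrix.rank_eq_finrank_span_row A
  rw [hrank] at this
  rw [Fintype.card_fin]
  exact this

lemma hba_aux_inv {n m : ℕ} (A : Matrix (Fin m) (Fin n) ℝ)
    (hinj : Function.Injective A.vecMul) (d : Fin n → ℝ) (hd : ∀ i, 0 < d i) :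
    (A * Matrix.diagonal (fun i => (d i)⁻¹) * Aᵀ) *
      (A * Matrix.diagonal (fun i => (d i)⁻¹) * Aᵀ)⁻¹ = 1 := by
  set M := A * Matrix.diagonal (fun i => (d i)⁻¹) * Aᵀ with hM
  have hherm : M.IsHermitian := by
    have : Mᵀ = M := by
      rw [hM, Matrix.transpose_mul, Matrix.transpose_mul, Matrix.transpose_transpose,
        Matrix.diagonal_transpose, Matrix.mul_assoc]
    simpa [Matrix.IsHermitian] using this
  have hpd : M.PosDef := by
    refine Matrix.PosDef.of_dotProduct_mulVec_pos hherm fun z hz => ?_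
    have hw : z ᵥ* A ≠ 0 := fun h0 => hz (hinj (h0.trans (Matrix.zero_vecMul A).symm))
    have hq : star z ⬝ᵥ (M *ᵥ z) = ∑ i, (z ᵥ* A) i * ((d i)⁻¹ * (z ᵥ* A) i) := by
      rw [hM, Matrix.mul_assoc, ← Matrix.mulVec_mulVec, ← Matrix.mulVec_mulVec,
        Matrix.dotProduct_mulVec, Matrix.mulVec_transpose]
      simp [dotProduct, Matrix.mulVec_diagonal]
    rw [hq]
    obtain ⟨j, hj⟩ : ∃ j, (z ᵥ* A) j ≠ 0 := by
      by_contra h; push_neg at h; exact hw (funext h)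
    refine Finset.sum_pos' (fun i _ => ?_) ⟨j, Finset.mem_univ j, ?_⟩
    · have h1 : 0 ≤ (d i)⁻¹ := (inv_pos.mpr (hd i)).le
      nlinarith [sq_nonneg ((z ᵥ* A) i)]
    · have h1 : 0 < (d j)⁻¹ := inv_pos.mpr (hd j)
      have h2 : 0 < (z ᵥ* A) j * (z ᵥ* A) j := mul_self_pos.mpr hj
      nlinarith
  exact Matrix.mul_nonsing_inv M (isUnit_iff_ne_zero.mpr hpd.det_pos.ne')

end Aux

open Matrix Filter Set in
theorem stmt5
    {n m : ℕ}
    (A : Matrix (Fin m) (Fin n) ℝ) (b : Fin m → ℝ)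
    (hrank : A.rank = m)
    (f : (Fin n → ℝ) → ℝ) (g : (Fin n → ℝ) → Fin n → ℝ)
    (hgrad : ∀ x ∈ HBA.Feas A b, HasFDerivAt f (HBA.toDualCLM (g x)) x)
    (Lf : ℝ) (hLf : 0 < Lf)
    (hLip : ∀ x ∈ HBA.Feas A b, ∀ x' ∈ HBA.Feas A b,
      HBA.euclNorm (g x - g x') ≤ Lf * HBA.euclNorm (x - x'))
    (x0 : Fin n → ℝ) (hx0 : x0 ∈ HBA.RelInt A b)
    (hbdd : Bornology.IsBounded {x | x ∈ HBA.Feas A b ∧ f x ≤ f x0})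
    (θ θd D : Fin n → ℝ → ℝ)
    (hθ1 : ∀ i, ∀ t ∈ Set.Ioi (0:ℝ), HasDerivAt (θ i) (θd i t) t)
    (hθ2 : ∀ i, ∀ t ∈ Set.Ioi (0:ℝ), HasDerivAt (θd i) (D i t) t)
    (hDpos : ∀ i, ∀ t ∈ Set.Ioi (0:ℝ), 0 < D i t)
    (hDlip : ∀ i, ∀ t ∈ Set.Ioi (0:ℝ), ∃ r > (0:ℝ), ∃ K : NNReal,
      LipschitzOnWith K (D i) (Set.Ioo (t - r) (t + r) ∩ Set.Ioi 0))
    (hsteep : ∀ i, Filter.Tendsto (θd i) (nhdsWithin (0:ℝ) (Set.Ioi 0)) Filter.atBot)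
    (β : ℝ) (hβ : 0 < β) (hDβ : ∀ i, ∀ t ∈ Set.Ioi (0:ℝ), β ≤ D i t)
    (ε : ℝ) (hε : 0 < ε) (hDε : ∀ i, ∀ t ∈ Set.Ioi (0:ℝ), ε ≤ t * D i t)
    (μ δ : ℝ) (hμ : μ ∈ Set.Ioo (0:ℝ) 1) (hδ : δ ∈ Set.Ioo (0:ℝ) 1)
    (x : Fin n → ℝ) (hx : x ∈ HBA.RelInt A b) (hvx : HBA.searchDir A D g x ≠ 0) :
    ∃ l : ℕ, HBA.armijoCond A D g f β Lf μ δ x l := by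
  classical
  obtain ⟨hxb, hxpos⟩ := hx
  set d : Fin n → ℝ := fun i => D i (x i) with hdd
  have hdpos : ∀ i, 0 < d i := fun i => hDpos i (x i) (hxpos i)
  have hHi : HBA.Hinv D x = Matrix.diagonal (fun i => (d i)⁻¹) := rfl
  set r : Fin n → ℝ := HBA.redCost A D g x with hrdef
  set v : Fin n → ℝ := HBA.searchDir A D g x with hvdef
  set y : Fin m → ℝ := HBA.dualY A D g x with hydef
  -- A v = 0
  have hinj := hba_aux_inj A hrank
  have hMinv := hba_aux_inv A hinj d hdpos
  have key : A * HBA.Hinv D x * Aᵀ * (A * HBA.Hinv D x * Aᵀ)⁻¹ * A * HBA.Hinv D x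
      = A * HBA.Hinv D x := by
    rw [hHi, hMinv, Matrix.one_mul]
  have hAv : A *ᵥ v = 0 := by
    have hv' : v = -(HBA.Hinv D x *ᵥ (g x - Aᵀ *ᵥ y)) := rfl
    have hy' : y = (A * HBA.Hinv D x * Aᵀ)⁻¹ *ᵥ (A *ᵥ (HBA.Hinv D x *ᵥ g x)) := rfl
    rw [hv', hy']
    simp only [Matrix.mulVec_neg, Matrix.mulVec_sub, Matrix.mulVec_mulVec,
      ← Matrix.mul_assoc]
    rw [key]
    simp
  -- componentwise: d i * v i = - r i
  have hdv : ∀ i, d i * v i = -(r i) := by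
    intro i
    have : v i = -((d i)⁻¹ * r i) := by
      rw [hvdef]
      unfold HBA.searchDir
      simp [hHi, Matrix.mulVec_diagonal, hrdef]
    rw [this, mul_neg, ← mul_assoc, mul_inv_cancel₀ (hdpos i).ne', one_mul]
  -- N = xnorm2
  set N : ℝ := HBA.xnorm2 D x v with hNdef
  have hNr : N = -(r ⬝ᵥ v) := by
    rw [hNdef]
    unfold HBA.xnorm2 HBA.Hmat
    rw [dotProduct, dotProduct]
    rw [← Finset.sum_neg_distrib]
    refine Finset.sum_congr rfl fun i _ => ?_
    rw [Matrix.mulVec_diagonal, hdv i]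
    ring
  have hNpos : 0 < N := by
    rw [hNdef]
    unfold HBA.xnorm2 HBA.Hmat
    rw [dotProduct]
    obtain ⟨j, hj⟩ : ∃ j, v j ≠ 0 := by
      by_contra h; push_neg at h; exact hvx (funext h)
    refine Finset.sum_pos' (fun i _ => ?_) ⟨j, Finset.mem_univ j, ?_⟩
    · rw [Matrix.mulVec_diagonal]
      nlinarith [sq_nonneg (v i), (hdpos i).le]
    · rw [Matrix.mulVec_diagonal]
      nlinarith [mul_self_pos.mpr hj, hdpos j]
  -- g x ⬝ v = -N
  have hgv : g x ⬝ᵥ v = -N := by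
    have hgr : g x = r + Aᵀ *ᵥ y := by
      rw [hrdef]; unfold HBA.redCost; rw [sub_add_cancel]
    rw [hgr, add_dotProduct]
    have h1 : (Aᵀ *ᵥ y) ⬝ᵥ v = 0 := by
      rw [Matrix.mulVec_transpose, ← Matrix.dotProduct_mulVec, hAv, dotProduct_zero]
    rw [h1, hNr]
    ring
  -- alphaBar positive
  set c : ℝ := HBA.alphaBar A D g β Lf x with hcdef
  have hcpos : 0 < c := by
    rw [hcdef]
    unfold HBA.alphaBar
    set S : Set ℝ := {a : ℝ | ∃ i, 0 < HBA.redCost A D g x i ∧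
      a = x i * D i (x i) / HBA.redCost A D g x i} with hS
    have hSsub : S ⊆ (fun i => x i * D i (x i) / HBA.redCost A D g x i) '' Set.univ := by
      rintro a ⟨i, _, rfl⟩; exact ⟨i, trivial, rfl⟩
    have hfin : (insert (2 * β / Lf) S).Finite :=
      Set.Finite.insert _ (((Set.finite_univ).image _).subset hSsub)
    have hmem' : sInf (insert (2 * β / Lf) S) ∈ insert (2 * β / Lf) S :=
      (Set.insert_nonempty _ _).csInf_mem hfin
    rcases hmem' with h | ⟨i, hi, ha⟩
    · rw [h]; positivity
    · rw [ha]
      exact div_pos (mul_pos (hxpos i) (hdpos i)) hi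
  -- derivative along line
  have hfd : HasFDerivAt f (HBA.toDualCLM (g x)) x := hgrad x ⟨hxb, fun i => (hxpos i).le⟩
  have happ : HBA.toDualCLM (g x) v = -N := by
    rw [← hgv]
    unfold HBA.toDualCLM
    simp [dotProduct]
  have hlin : HasDerivAt (fun t : ℝ => x + t • v) v 0 := by
    have h0 : HasDerivAt (fun t : ℝ => t • v) ((1:ℝ) • v) 0 := (hasDerivAt_id (0:ℝ)).smul_const v
    simpa using h0.const_add x
  have hline : HasDerivAt (fun t : ℝ => f (x + t • v)) (-N) 0 := by
    have hfd' : HasFDerivAt f (HBA.toDualCLM (g x)) ((fun t : ℝ => x + t • v) 0) := by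
      simpa using hfd
    have h2 := HasFDerivAt.comp_hasDerivAt (0:ℝ) hfd' hlin
    have h3 : HasDerivAt (fun t : ℝ => f (x + t • v)) (HBA.toDualCLM (g x) v) 0 := h2
    rwa [happ] at h3
  -- slope argument
  have hslope : Tendsto (slope (fun t : ℝ => f (x + t • v)) 0) (nhdsWithin 0 (Set.Ioi 0)) (nhds (-N)) :=
    (hasDerivAt_iff_tendsto_slope.mp hline).mono_left
      (nhdsWithin_mono 0 (fun t ht => ne_of_gt ht))
  have hlt : -N < -(μ * N) := by nlinarith [hμ.1, hμ.2, hNpos]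
  have hev : ∀ᶠ t in nhdsWithin (0:ℝ) (Set.Ioi 0),
      slope (fun t : ℝ => f (x + t • v)) 0 t ≤ -(μ * N) :=
    (hslope.eventually (eventually_le_nhds hlt))
  have htend : Tendsto (fun l : ℕ => δ ^ l * c) atTop (nhdsWithin 0 (Set.Ioi 0)) := by
    apply tendsto_nhdsWithin_of_tendsto_nhds_of_eventually_within
    · have := tendsto_pow_atTop_nhds_zero_of_lt_one hδ.1.le hδ.2
      simpa using this.mul_const c
    · exact Eventually.of_forall fun l => mul_pos (pow_pos hδ.1 l) hcpos
  obtain ⟨l, hl⟩ := (htend.eventually hev).exists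
  refine ⟨l, ?_⟩
  unfold HBA.armijoCond
  rw [← hcdef, ← hvdef, ← hNdef]
  set t : ℝ := δ ^ l * c with htdef
  have htpos : 0 < t := mul_pos (pow_pos hδ.1 l) hcpos
  have hslope_eq : slope (fun t : ℝ => f (x + t • v)) 0 t = (f (x + t • v) - f x) / t := by
    rw [slope_def_field]
    simp
  rw [hslope_eq] at hl
  have := (div_le_iff₀ htpos).mp hl
  nlinarith
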